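/- For every integer k ≥ 2 there exists a constant C > 0 such that for all positive integers n, ex(n, C_{2k}□P_2) ≤ C · n^{5/3}. -/
import Mathlib

set_option maxRecDepth 4000

open SimpleGraph

/-- `CopyIn H G` means `G` contains a subgraph isomorphic to `H`,
i.e. there is an injective graph homomorphism from `H` to `G`. -/
def CopyIn {α β : Type*} (H : SimpleGraph α) (G : SimpleGraph β) : Prop :=
  ∃ f : α ↪ β, ∀ a b, H.Adj a b → G.Adj (f a) (f b)

/-- The Turán number `ex(n, H)`: the maximum number of edges in an
`H`-free graph on `n` vertices. -/
noncomputable def exNum {α : Type*} (n : ℕ) (H : SimpleGraph α) : ℕ :=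
  sSup {m : ℕ | ∃ G : SimpleGraph (Fin n), ¬ CopyIn H G ∧ G.edgeSet.ncard = m}

/-- The odd prism `C_{2k+1} □ P_2`. -/
def oddPrism (k : ℕ) : SimpleGraph (Fin (2 * k + 1) × Fin 2) :=
  cycleGraph (2 * k + 1) □ pathGraph 2

/-- The even prism `C_{2k} □ P_2`. -/
def evenPrism (k : ℕ) : SimpleGraph (Fin (2 * k) × Fin 2) :=
  cycleGraph (2 * k) □ pathGraph 2

namespace EvenPrismAux

open Finset

/- ### Arithmetic helpers -/

lemma mod1 {N i : ℕ} (h : i < N) : (i + 1) % N = if i + 1 = N then 0 else i + 1 := by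
  split
  · next he => rw [he, Nat.mod_self]
  · next he => exact Nat.mod_eq_of_lt (by omega)

lemma mod2 {N i : ℕ} (h : i < N) : (i + (N - 1)) % N = if i = 0 then N - 1 else i - 1 := by
  split
  · next he => subst he; simp [Nat.mod_eq_of_lt (show N - 1 < N by omega)]
  · next he =>
      have : i + (N - 1) = (i - 1) + N := by omega
      rw [this, Nat.add_mod_right]
      exact Nat.mod_eq_of_lt (by omega)

lemma modinv {N u b : ℕ} (hu : u < N) (hb : b < N) (h : b = (u + 1) % N) :
    u = (b + (N - 1)) % N := by
  rw [mod1 hu] at h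
  rw [mod2 hb]
  split at h <;> split <;> omega

lemma parN {N i : ℕ} (hN : N % 2 = 0) (h2 : 2 ≤ N) (h : i < N) :
    ((i + 1) % N) % 2 ≠ i % 2 := by
  rw [mod1 h]
  split <;> omega

lemma finsub {N u v : ℕ} (hN : 2 ≤ N) (hu : u < N) (hv : v < N) :
    (N - v + u) % N = 1 ↔ u = (v + 1) % N := by
  rw [mod1 hv]
  rcases Nat.lt_or_ge (N - v + u) N with h | h
  · rw [Nat.mod_eq_of_lt h]; split <;> omega
  · have key : (N - v + u) % N = (N - v + u - N) % N := Nat.mod_eq_sub_mod h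
    have hlt : N - v + u - N < N := by omega
    rw [key, Nat.mod_eq_of_lt hlt]
    split <;> omega

/- ### Counting lemmas -/

variable {n : ℕ} (G : SimpleGraph (Fin n)) [DecidableRel G.Adj]

/-- common neighborhood of three vertices -/
def cn3 (a b c : Fin n) : Finset (Fin n) :=
  univ.filter (fun v => G.Adj a v ∧ G.Adj b v ∧ G.Adj c v)

lemma mem_cn3 {a b c v : Fin n} :
    v ∈ cn3 G a b c ↔ G.Adj a v ∧ G.Adj b v ∧ G.Adj c v := by
  simp [cn3]

lemma count_adj (v : Fin n) : (univ.filter (fun u => G.Adj u v)).card = G.degree v := by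
  rw [← card_neighborFinset_eq_degree, neighborFinset_eq_filter]
  congr 1
  apply filter_congr
  intro u _
  simp [adj_comm]

lemma card_filter_pair {α β : Type*} [Fintype α] [Fintype β] (p : α → Prop) (q : β → Prop)
    [DecidablePred p] [DecidablePred q] :
    (univ.filter (fun x : α × β => p x.1 ∧ q x.2)).card
      = (univ.filter p).card * (univ.filter q).card := by
  rw [← Finset.univ_product_univ, Finset.filter_product, card_product]

lemma card_filter_triple (p q r : Fin n → Prop) [DecidablePred p] [DecidablePred q]
    [DecidablePred r] :
    (univ.filter (fun T : Fin n × Fin n × Fin n => p T.1 ∧ q T.2.1 ∧ r T.2.2)).card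
      = (univ.filter p).card * ((univ.filter q).card * (univ.filter r).card) := by
  have h2 := card_filter_pair q r
  have h1 := card_filter_pair p (fun s : Fin n × Fin n => q s.1 ∧ r s.2)
  rw [h2] at h1
  exact h1

lemma sum_cn3_card :
    ∑ T : Fin n × Fin n × Fin n, (cn3 G T.1 T.2.1 T.2.2).card = ∑ v, G.degree v ^ 3 := by
  calc ∑ T : Fin n × Fin n × Fin n, (cn3 G T.1 T.2.1 T.2.2).card
      = ∑ T : Fin n × Fin n × Fin n, ∑ v,
          if G.Adj T.1 v ∧ G.Adj T.2.1 v ∧ G.Adj T.2.2 v then 1 else 0 := by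
        refine Finset.sum_congr rfl fun T _ => ?_
        rw [cn3, card_filter]
    _ = ∑ v, ∑ T : Fin n × Fin n × Fin n,
          if G.Adj T.1 v ∧ G.Adj T.2.1 v ∧ G.Adj T.2.2 v then 1 else 0 := Finset.sum_comm
    _ = ∑ v, (univ.filter (fun T : Fin n × Fin n × Fin n =>
          G.Adj T.1 v ∧ G.Adj T.2.1 v ∧ G.Adj T.2.2 v)).card := by
        refine Finset.sum_congr rfl fun v _ => ?_
        rw [card_filter]
    _ = ∑ v, G.degree v ^ 3 := by
        refine Finset.sum_congr rfl fun v _ => ?_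
        rw [card_filter_triple (fun u => G.Adj u v) (fun u => G.Adj u v) (fun u => G.Adj u v),
          count_adj]
        ring

/-- bad triples: pairwise distinct with small common neighborhood -/
def badT (m : ℕ) : Finset (Fin n × Fin n × Fin n) :=
  univ.filter (fun s => s.1 ≠ s.2.1 ∧ s.1 ≠ s.2.2 ∧ s.2.1 ≠ s.2.2 ∧ (cn3 G s.1 s.2.1 s.2.2).card < m)

def badIn (m : ℕ) (T : Fin n × Fin n × Fin n) : Finset (Fin n × Fin n × Fin n) :=
  (badT G m).filter (fun s => s.1 ∈ cn3 G T.1 T.2.1 T.2.2 ∧ s.2.1 ∈ cn3 G T.1 T.2.1 T.2.2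
    ∧ s.2.2 ∈ cn3 G T.1 T.2.1 T.2.2)

lemma count_T (a b c : Fin n) :
    (univ.filter (fun T : Fin n × Fin n × Fin n => a ∈ cn3 G T.1 T.2.1 T.2.2
      ∧ b ∈ cn3 G T.1 T.2.1 T.2.2 ∧ c ∈ cn3 G T.1 T.2.1 T.2.2)).card
      = (cn3 G a b c).card ^ 3 := by
  have hcong : (univ.filter (fun T : Fin n × Fin n × Fin n => a ∈ cn3 G T.1 T.2.1 T.2.2
      ∧ b ∈ cn3 G T.1 T.2.1 T.2.2 ∧ c ∈ cn3 G T.1 T.2.1 T.2.2))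
      = univ.filter (fun T : Fin n × Fin n × Fin n =>
        T.1 ∈ cn3 G a b c ∧ T.2.1 ∈ cn3 G a b c ∧ T.2.2 ∈ cn3 G a b c) := by
    apply filter_congr
    intro T _
    simp only [mem_cn3]
    constructor
    · rintro ⟨⟨h1,h2,h3⟩,⟨h4,h5,h6⟩,⟨h7,h8,h9⟩⟩
      exact ⟨⟨h1.symm, h4.symm, h7.symm⟩, ⟨h2.symm, h5.symm, h8.symm⟩, ⟨h3.symm, h6.symm, h9.symm⟩⟩
    · rintro ⟨⟨h1,h2,h3⟩,⟨h4,h5,h6⟩,⟨h7,h8,h9⟩⟩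
      exact ⟨⟨h1.symm, h4.symm, h7.symm⟩, ⟨h2.symm, h5.symm, h8.symm⟩, ⟨h3.symm, h6.symm, h9.symm⟩⟩
  rw [hcong, card_filter_triple (fun u => u ∈ cn3 G a b c) (fun u => u ∈ cn3 G a b c)
    (fun u => u ∈ cn3 G a b c)]
  have : univ.filter (fun u => u ∈ cn3 G a b c) = cn3 G a b c := by
    ext u; simp
  rw [this]; ring

lemma sum_badIn (m : ℕ) :
    ∑ T : Fin n × Fin n × Fin n, (badIn G m T).card ≤ n ^ 3 * m ^ 3 := by
  have swap : ∑ T : Fin n × Fin n × Fin n, (badIn G m T).card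
      = ∑ s ∈ badT G m, (univ.filter (fun T : Fin n × Fin n × Fin n =>
          s.1 ∈ cn3 G T.1 T.2.1 T.2.2 ∧ s.2.1 ∈ cn3 G T.1 T.2.1 T.2.2
          ∧ s.2.2 ∈ cn3 G T.1 T.2.1 T.2.2)).card := by
    simp only [badIn, card_filter]
    exact Finset.sum_comm
  rw [swap]
  have hle : ∀ s ∈ badT G m, (univ.filter (fun T : Fin n × Fin n × Fin n =>
      s.1 ∈ cn3 G T.1 T.2.1 T.2.2 ∧ s.2.1 ∈ cn3 G T.1 T.2.1 T.2.2
      ∧ s.2.2 ∈ cn3 G T.1 T.2.1 T.2.2)).card ≤ m ^ 3 := by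
    intro s hs
    rw [count_T]
    have : (cn3 G s.1 s.2.1 s.2.2).card < m := by
      simp only [badT, mem_filter] at hs
      exact hs.2.2.2.2
    exact Nat.pow_le_pow_left this.le 3
  calc ∑ s ∈ badT G m, _ ≤ ∑ _s ∈ badT G m, m ^ 3 := Finset.sum_le_sum hle
    _ = (badT G m).card * m ^ 3 := by rw [Finset.sum_const, smul_eq_mul]
    _ ≤ n ^ 3 * m ^ 3 := by
        apply Nat.mul_le_mul_right
        calc (badT G m).card ≤ (univ : Finset (Fin n × Fin n × Fin n)).card :=
              card_filter_le _ _
          _ = n ^ 3 := by simp [pow_succ, mul_assoc]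

/- ### Dependent random choice -/

lemma drc (m a : ℕ) (hbig : n ^ 3 * (m ^ 3 + a) < ∑ v, G.degree v ^ 3) :
    ∃ X : Finset (Fin n), a ≤ X.card ∧ ∀ x y z : Fin n, x ∈ X → y ∈ X → z ∈ X →
      x ≠ y → x ≠ z → y ≠ z → m ≤ (cn3 G x y z).card := by
  have hcardT : (univ : Finset (Fin n × Fin n × Fin n)).card = n ^ 3 := by
    simp [pow_succ, mul_assoc]
  have key : ∃ T : Fin n × Fin n × Fin n, (badIn G m T).card + a ≤ (cn3 G T.1 T.2.1 T.2.2).card := by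
    by_contra hc
    push_neg at hc
    have h1 : ∑ T : Fin n × Fin n × Fin n, ((cn3 G T.1 T.2.1 T.2.2).card + 1)
        ≤ ∑ T : Fin n × Fin n × Fin n, ((badIn G m T).card + a) :=
      Finset.sum_le_sum (fun T _ => (hc T))
    rw [Finset.sum_add_distrib, Finset.sum_add_distrib, sum_cn3_card] at h1
    simp only [Finset.sum_const, smul_eq_mul, mul_one, hcardT] at h1
    have h2 := sum_badIn G m
    have h3 := hbig
    nlinarith [h1, h2, h3]
  obtain ⟨T, hT⟩ := key
  refine ⟨cn3 G T.1 T.2.1 T.2.2 \ (badIn G m T).image (·.1), ?_, ?_⟩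
  · have himg : ((badIn G m T).image (·.1)).card ≤ (badIn G m T).card := card_image_le
    have := Finset.le_card_sdiff ((badIn G m T).image (·.1)) (cn3 G T.1 T.2.1 T.2.2)
    omega
  · intro x y z hx hy hz hxy hxz hyz
    by_contra hlt
    push_neg at hlt
    simp only [mem_sdiff] at hx hy hz
    apply hx.2
    apply Finset.mem_image.2
    refine ⟨(x, y, z), ?_, rfl⟩
    simp only [badIn, badT, mem_filter, mem_univ, true_and]
    exact ⟨⟨hxy, hxz, hyz, hlt⟩, hx.1, hy.1, hz.1⟩

/- ### Greedy embedding -/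

lemma greedy {V : Type*} [DecidableEq V] [Fintype V] (M : ℕ) (S : Fin M → Finset V)
    (F : Finset V) (hcard : ∀ j, F.card + M ≤ (S j).card) :
    ∃ h : Fin M → V, Function.Injective h ∧ ∀ i, h i ∈ S i ∧ h i ∉ F := by
  suffices H : ∀ t, t ≤ M → ∃ h : Fin t → V, Function.Injective h ∧
      ∀ i : Fin t, (∀ (hi : i.val < M), h i ∈ S ⟨i.val, hi⟩) ∧ h i ∉ F by
    obtain ⟨h, hinj, hp⟩ := H M le_rfl
    exact ⟨h, hinj, fun i => ⟨by simpa using (hp i).1 i.isLt, (hp i).2⟩⟩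
  intro t
  induction t with
  | zero => exact fun _ => ⟨fun i => i.elim0, fun i => i.elim0, fun i => i.elim0⟩
  | succ t ih =>
      intro ht
      obtain ⟨h, hinj, hp⟩ := ih (by omega)
      have htM : t < M := ht
      set used := F ∪ (univ : Finset (Fin t)).image h with hused
      have hucard : used.card ≤ F.card + t := by
        calc used.card ≤ F.card + ((univ : Finset (Fin t)).image h).card := card_union_le _ _
          _ ≤ F.card + t := by
              have := card_image_le (s := (univ : Finset (Fin t))) (f := h)
              simp at this; omega
      have hne : (S ⟨t, htM⟩ \ used).Nonempty := by
        rw [← Finset.card_pos]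
        have h1 := Finset.le_card_sdiff used (S ⟨t, htM⟩)
        have h2 := hcard ⟨t, htM⟩
        omega
      obtain ⟨x, hx⟩ := hne
      rw [mem_sdiff] at hx
      have hxF : x ∉ F := fun hf => hx.2 (Finset.mem_union_left _ hf)
      have hxh : ∀ j : Fin t, h j ≠ x := by
        intro j hj
        exact hx.2 (Finset.mem_union_right _ (Finset.mem_image.2 ⟨j, mem_univ _, hj⟩))
      refine ⟨fun i => if hi : i.val < t then h ⟨i.val, hi⟩ else x, ?_, ?_⟩
      · intro a b hab
        by_cases ha : a.val < t <;> by_cases hb : b.val < t <;> simp only [ha, hb, dif_pos,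
          dif_neg, dite_true, dite_false] at hab
        · have := congrArg Fin.val (hinj hab); apply Fin.ext; simpa using this
        · exact absurd hab (hxh _)
        · exact absurd hab.symm (hxh _)
        · apply Fin.ext; omega
      · intro i
        by_cases hi : i.val < t
        · simp only [hi, dif_pos]
          exact ⟨fun hm => (hp ⟨i.val, hi⟩).1 hm, (hp ⟨i.val, hi⟩).2⟩
        · simp only [hi, dif_neg]
          have : i.val = t := by omega
          refine ⟨fun hm => ?_, hxF⟩
          have : (⟨i.val, hm⟩ : Fin M) = ⟨t, htM⟩ := by apply Fin.ext; simpa using this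
          rw [this]
          exact hx.1

lemma embed (k : ℕ) (hk : 2 ≤ k)
    (X : Finset (Fin n)) (hX : 2 * k ≤ X.card)
    (hcn : ∀ x y z : Fin n, x ∈ X → y ∈ X → z ∈ X → x ≠ y → x ≠ z → y ≠ z →
      4 * k + 1 ≤ (cn3 G x y z).card) :
    CopyIn (evenPrism k) G := by
  classical
  set N := 2 * k with hNdef
  have hN4 : 4 ≤ N := by omega
  have hNe : N % 2 = 0 := by omega
  -- an injection g : Fin N ↪ X
  have hcard : Fintype.card (Fin N) ≤ Fintype.card {x // x ∈ X} := by
    rw [Fintype.card_coe, Fintype.card_fin]; exact hX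
  obtain ⟨g0⟩ := Function.Embedding.nonempty_of_card_le hcard
  set g : Fin N → Fin n := fun i => (g0 i : Fin n) with hgdef
  have hginj : Function.Injective g := fun a b hab => g0.injective (Subtype.ext hab)
  have hgX : ∀ i, g i ∈ X := fun i => (g0 i).2
  set nxt : Fin N → Fin N := fun i => ⟨(i.val + 1) % N, Nat.mod_lt _ (by omega)⟩ with hnxtdef
  set prv : Fin N → Fin N := fun i => ⟨(i.val + (N - 1)) % N, Nat.mod_lt _ (by omega)⟩ with hprvdef
  have hdist : ∀ i : Fin N, i ≠ nxt i ∧ i ≠ prv i ∧ nxt i ≠ prv i := by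
    intro i
    have h1 := mod1 i.isLt
    have h2 := mod2 (N := N) i.isLt
    have key : i.val ≠ (i.val + 1) % N ∧ i.val ≠ (i.val + (N - 1)) % N ∧
        (i.val + 1) % N ≠ (i.val + (N - 1)) % N := by
      rw [h1, h2]
      have := i.isLt
      split <;> split <;> omega
    refine ⟨?_, ?_, ?_⟩ <;> intro he <;> rw [Fin.ext_iff] at he <;>
      simp only [hnxtdef, hprvdef] at he <;> tauto
  -- greedy choice of the second class
  set S : Fin N → Finset (Fin n) := fun i => cn3 G (g i) (g (nxt i)) (g (prv i)) with hSdef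
  have hScard : ∀ j, ((univ : Finset (Fin N)).image g).card + N ≤ (S j).card := by
    intro j
    have h1 : ((univ : Finset (Fin N)).image g).card ≤ N := by
      have := card_image_le (s := (univ : Finset (Fin N))) (f := g)
      simpa using this
    have h2 : 4 * k + 1 ≤ (S j).card := by
      obtain ⟨d1, d2, d3⟩ := hdist j
      exact hcn _ _ _ (hgX j) (hgX (nxt j)) (hgX (prv j))
        (fun he => d1 (hginj he)) (fun he => d2 (hginj he)) (fun he => d3 (hginj he))
    omega
  obtain ⟨h, hhinj, hh⟩ := greedy N S ((univ : Finset (Fin N)).image g) hScard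
  have hhg : ∀ i j : Fin N, h i ≠ g j := by
    intro i j he
    exact (hh i).2 (Finset.mem_image.2 ⟨j, mem_univ _, he.symm⟩)
  have hAdjS : ∀ i : Fin N, G.Adj (g i) (h i) ∧ G.Adj (g (nxt i)) (h i) ∧
      G.Adj (g (prv i)) (h i) := fun i => (mem_cn3 G).1 (hh i).1
  -- the embedding
  have finj : Function.Injective (fun p : Fin N × Fin 2 =>
      if p.2.val = p.1.val % 2 then g p.1 else h p.1) := by
    rintro ⟨pi, pj⟩ ⟨qi, qj⟩ hpq
    simp only at hpq
    split_ifs at hpq with hp hq hq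
    · have h1 : pi = qi := hginj hpq
      subst h1
      have : pj = qj := Fin.ext (by omega)
      rw [this]
    · exact absurd hpq.symm (hhg _ _)
    · exact absurd hpq (hhg _ _)
    · have h1 : pi = qi := hhinj hpq
      subst h1
      have hj2 := pj.isLt
      have hq2 := qj.isLt
      have : pj = qj := Fin.ext (by omega)
      rw [this]
  refine ⟨⟨fun p : Fin N × Fin 2 => if p.2.val = p.1.val % 2 then g p.1 else h p.1, finj⟩, ?_⟩
  rintro ⟨pi, pj⟩ ⟨qi, qj⟩ hadj
  simp only [Function.Embedding.coeFn_mk]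
  simp only [evenPrism, boxProd_adj] at hadj
  rcases hadj with ⟨hcyc, hj⟩ | ⟨hpath, hi⟩
  · -- cycle edge
    subst hj
    rw [cycleGraph_adj'] at hcyc
    have hsub : pi.val = (qi.val + 1) % N ∨ qi.val = (pi.val + 1) % N := by
      rcases hcyc with hc | hc
      · left
        rw [Fin.sub_def] at hc
        exact (finsub (by omega) pi.isLt qi.isLt).1 hc
      · right
        rw [Fin.sub_def] at hc
        exact (finsub (by omega) qi.isLt pi.isLt).1 hc
    have hpar : pi.val % 2 ≠ qi.val % 2 := by
      rcases hsub with hc | hc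
      · rw [hc]; exact parN hNe (by omega) qi.isLt
      · rw [hc]; exact (parN hNe (by omega) pi.isLt).symm
    have hrel : (pi = nxt qi ∨ pi = prv qi) := by
      rcases hsub with hc | hc
      · left; exact Fin.ext hc
      · right; exact Fin.ext (modinv pi.isLt qi.isLt hc)
    have hadjgh : G.Adj (g pi) (h qi) := by
      rcases hrel with hr | hr
      · rw [hr]; exact (hAdjS qi).2.1
      · rw [hr]; exact (hAdjS qi).2.2
    by_cases hp : pj.val = pi.val % 2
    · have hq : ¬ pj.val = qi.val % 2 := by omega
      rw [if_pos hp, if_neg hq]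
      exact hadjgh
    · have hq : pj.val = qi.val % 2 := by
        have := pj.isLt
        omega
      rw [if_neg hp, if_pos hq]
      have hrel' : (qi = nxt pi ∨ qi = prv pi) := by
        rcases hsub with hc | hc
        · right; exact Fin.ext (modinv qi.isLt pi.isLt hc)
        · left; exact Fin.ext hc
      have : G.Adj (g qi) (h pi) := by
        rcases hrel' with hr | hr
        · rw [hr]; exact (hAdjS pi).2.1
        · rw [hr]; exact (hAdjS pi).2.2
      exact this.symm
  · -- layer edge
    subst hi
    rw [pathGraph_adj] at hpath
    have hjj : pj.val ≠ qj.val := by omega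
    by_cases hp : pj.val = pi.val % 2
    · have hq : ¬ qj.val = pi.val % 2 := by omega
      rw [if_pos hp, if_neg hq]
      exact (hAdjS pi).1
    · have hq : qj.val = pi.val % 2 := by
        have h1 := pj.isLt
        have h2 := qj.isLt
        omega
      rw [if_neg hp, if_pos hq]
      exact (hAdjS pi).1.symm

end EvenPrismAux

open EvenPrismAux Finset in
/-- For every `k ≥ 2` there is a constant `C > 0` such that
`ex(n, C_{2k}□P_2) ≤ C n^{5/3}` for all positive `n`. -/
theorem even_prism_extremal_number_upper (k : ℕ) (hk : 2 ≤ k) :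
    ∃ C : ℝ, 0 < C ∧ ∀ n : ℕ, 0 < n →
      (exNum n (evenPrism k) : ℝ) ≤ C * (n : ℝ) ^ ((5 : ℝ) / 3) := by
  classical
  refine ⟨((8 * k : ℕ) : ℝ), Nat.cast_pos.2 (by omega), ?_⟩
  intro n hn
  set C : ℝ := ((8 * k : ℕ) : ℝ) with hCdef
  have hC : C = 8 * (k : ℝ) := by rw [hCdef]; push_cast; ring
  have hk' : (2 : ℝ) ≤ (k : ℝ) := by exact_mod_cast hk
  set R : ℝ := C * (n : ℝ) ^ ((5 : ℝ) / 3) with hRdef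
  have hR0 : 0 ≤ R := by
    have : (0:ℝ) ≤ (n : ℝ) ^ ((5 : ℝ) / 3) := Real.rpow_nonneg (Nat.cast_nonneg n) _
    rw [hRdef, hC]; positivity
  have key : ∀ m ∈ {m : ℕ | ∃ G : SimpleGraph (Fin n),
      ¬ CopyIn (evenPrism k) G ∧ G.edgeSet.ncard = m}, m ≤ Nat.floor R := by
    rintro m ⟨G, hfree, hm⟩
    haveI : DecidableRel G.Adj := Classical.decRel _
    rw [Nat.le_floor_iff hR0]
    by_contra hgt
    push_neg at hgt
    -- m is the number of edges
    have hset : G.edgeSet.toFinset = G.edgeFinset := by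
      ext e; simp
    have hmcard : m = G.edgeFinset.card := by
      rw [← hm, Set.ncard_eq_toFinset_card', hset]
    set e := G.edgeFinset.card with hedef
    have he : R < (e : ℝ) := by rw [hmcard] at hgt; exact hgt
    -- power mean inequality
    have hch := pow_sum_div_card_le_sum_pow (s := (univ : Finset (Fin n)))
      (f := fun v => (G.degree v : ℝ)) (fun i _ => Nat.cast_nonneg _) 2
    rw [Finset.card_univ, Fintype.card_fin] at hch
    have hsum : ∑ v, (G.degree v : ℝ) = ((2 * e : ℕ) : ℝ) := by
      rw [← Nat.cast_sum]
      exact_mod_cast congrArg (Nat.cast (R := ℝ)) (G.sum_degrees_eq_twice_card_edges)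
    rw [hsum] at hch
    -- cube the edge bound
    have hRe : R ^ 3 < (e : ℝ) ^ 3 := by
      exact pow_lt_pow_left₀ he hR0 (by norm_num)
    have hpow53 : ((n : ℝ) ^ ((5 : ℝ) / 3)) ^ (3 : ℕ) = (n : ℝ) ^ (5 : ℕ) := by
      rw [← Real.rpow_natCast ((n : ℝ) ^ ((5 : ℝ) / 3)) 3,
        ← Real.rpow_mul (Nat.cast_nonneg n),
        show (5 : ℝ) / 3 * ((3 : ℕ) : ℝ) = ((5 : ℕ) : ℝ) by norm_num,
        Real.rpow_natCast]
    have hR3 : R ^ 3 = C ^ 3 * (n : ℝ) ^ (5 : ℕ) := by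
      rw [hRdef, mul_pow, hpow53]
    have hcube : C ^ 3 * (n : ℝ) ^ (5 : ℕ) < (e : ℝ) ^ 3 := by rw [← hR3]; exact hRe
    -- coefficient comparison
    have hcoef : ((4 * k + 1 : ℕ) : ℝ) ^ 3 + ((2 * k : ℕ) : ℝ) ≤ C ^ 3 := by
      rw [hC]
      push_cast
      nlinarith [hk', sq_nonneg ((k : ℝ) - 2)]
    -- the big natural inequality
    have hn2 : (0 : ℝ) < (n : ℝ) ^ (2 : ℕ) := by positivity
    have hbigR : ((n : ℝ)) ^ (3 : ℕ) * (((4 * k + 1 : ℕ) : ℝ) ^ 3 + ((2 * k : ℕ) : ℝ))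
        < ∑ v, (G.degree v : ℝ) ^ 3 := by
      have h1 : ((n : ℝ)) ^ (3 : ℕ) * (((4 * k + 1 : ℕ) : ℝ) ^ 3 + ((2 * k : ℕ) : ℝ))
          ≤ (n : ℝ) ^ (3 : ℕ) * C ^ 3 := by
        apply mul_le_mul_of_nonneg_left hcoef (by positivity)
      have h2 : (n : ℝ) ^ (3 : ℕ) * C ^ 3 < ((2 * e : ℕ) : ℝ) ^ 3 / (n : ℝ) ^ (2 : ℕ) := by
        rw [lt_div_iff₀ hn2]
        push_cast
        have he3 : (0:ℝ) ≤ (e : ℝ) ^ 3 := by positivity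
        calc (n : ℝ) ^ (3 : ℕ) * C ^ 3 * (n : ℝ) ^ (2 : ℕ)
            = C ^ 3 * (n : ℝ) ^ (5 : ℕ) := by ring
          _ < (e : ℝ) ^ 3 := hcube
          _ ≤ (2 * (e : ℝ)) ^ 3 := by nlinarith [he3]
      linarith [h1, h2, hch]
    have hbig : n ^ 3 * ((4 * k + 1) ^ 3 + 2 * k) < ∑ v, G.degree v ^ 3 := by
      have := hbigR
      rw [show (∑ v, (G.degree v : ℝ) ^ 3) = ((∑ v, G.degree v ^ 3 : ℕ) : ℝ) by push_cast; ring]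
        at this
      exact_mod_cast this
    obtain ⟨X, hX, hcn⟩ := drc G (4 * k + 1) (2 * k) hbig
    exact hfree (embed G k hk X hX hcn)
  have hne : {m : ℕ | ∃ G : SimpleGraph (Fin n),
      ¬ CopyIn (evenPrism k) G ∧ G.edgeSet.ncard = m}.Nonempty := by
    refine ⟨0, (⊥ : SimpleGraph (Fin n)), ?_, by simp⟩
    rintro ⟨f, hf⟩
    have hadj : (evenPrism k).Adj (⟨0, by omega⟩, 0) (⟨0, by omega⟩, 1) := by
      simp [evenPrism, boxProd_adj, pathGraph_adj]
    exact hf _ _ hadj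
  have hsup : exNum n (evenPrism k) ≤ Nat.floor R := csSup_le hne key
  calc (exNum n (evenPrism k) : ℝ) ≤ (Nat.floor R : ℝ) := Nat.cast_le.2 hsup
    _ ≤ R := Nat.floor_le hR0
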